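/- Assume the Y structure. Let d ∈ {0,1} with P(X=1, D=d) > 0 and P(X=0, D=d) > 0. Then P(Y=1 | X=1, D=d) − P(Y=1 | X=0, D=d) = P(Y=1)·P(Y=0) · ( p_{d|1} − p_{d|0} ) · [ p_{d|1}·( p_{C=1|00}·p_{C=1|11} − p_{C=1|10}·p_{C=1|01} ) − p_{d|0}·( p_{C=0|00}·p_{C=0|11} − p_{C=0|10}·p_{C=0|01} ) ] / ( [ P(Y=1)·( p_{C=1|11}·p_{d|1} + p_{C=0|11}·p_{d|0} ) + P(Y=0)·( p_{C=1|10}·p_{d|1} + p_{C=0|10}·p_{d|0} ) ] · [ P(Y=1)·( p_{C=1|01}·p_{d|1} + p_{C=0|01}·p_{d|0} ) + P(Y=0)·( p_{C=1|00}·p_{d|1} + p_{C=0|00}·p_{d|0} ) ] ). -/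

import Mathlib

open MeasureTheory ProbabilityTheory

variable {Ω : Type*} [MeasurableSpace Ω]

/-- The event that the random variable `X` takes the value `x`. -/
def ev (X : Ω → ℝ) (x : ℝ) : Set Ω := {ω | X ω = x}

/-- The probability of an event, as a real number. -/
noncomputable def pr (P : Measure Ω) (s : Set Ω) : ℝ := (P s).toReal

/-- The conditional probability `P(s | t)`, as a real number. -/
noncomputable def cpr (P : Measure Ω) (s t : Set Ω) : ℝ := pr (P[|t]) s

/-- The covariance of two real-valued random variables. -/
noncomputable def rcov (P : Measure Ω) (X Y : Ω → ℝ) : ℝ :=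
  ∫ ω, (X ω - ∫ ω', X ω' ∂P) * (Y ω - ∫ ω', Y ω' ∂P) ∂P

/-- The conditional covariance of two real-valued random variables given an event. -/
noncomputable def covCond (P : Measure Ω) (X Y : Ω → ℝ) (t : Set Ω) : ℝ :=
  rcov (P[|t]) X Y

/-- The conditional variance of a real-valued random variable given an event. -/
noncomputable def varCond (P : Measure Ω) (X : Ω → ℝ) (t : Set Ω) : ℝ :=
  covCond P X X t

/-- A measurable `{0,1}`-valued random variable. -/
def IsBin (X : Ω → ℝ) : Prop := Measurable X ∧ ∀ ω, X ω = 0 ∨ X ω = 1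

section Helpers

variable {Ω : Type*} [MeasurableSpace Ω] {P : Measure Ω} [IsProbabilityMeasure P]

lemma ev_meas {X : Ω → ℝ} (hX : IsBin X) (x : ℝ) : MeasurableSet (ev X x) :=
  hX.1 (measurableSet_singleton x)

lemma pr_nonneg (s : Set Ω) : 0 ≤ pr P s := ENNReal.toReal_nonneg

lemma cpr_nonneg (s t : Set Ω) : 0 ≤ cpr P s t := ENNReal.toReal_nonneg

lemma cpr_eq (s : Set Ω) {t : Set Ω} (ht : MeasurableSet t) :
    cpr P s t = pr P (t ∩ s) / pr P t := by
  unfold cpr pr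
  rw [ProbabilityTheory.cond_apply ht, ENNReal.toReal_mul, ENNReal.toReal_inv]
  ring

lemma pr_split {C : Ω → ℝ} (hC : IsBin C) {t : Set Ω} (ht : MeasurableSet t) :
    pr P t = pr P (t ∩ ev C 0) + pr P (t ∩ ev C 1) := by
  have hdisj : Disjoint (t ∩ ev C 0) (t ∩ ev C 1) := by
    rw [Set.disjoint_left]
    rintro ω ⟨-, h0⟩ ⟨-, h1⟩
    have : (0 : ℝ) = 1 := (h0 : C ω = 0).symm.trans (h1 : C ω = 1)
    norm_num at this
  have hunion : t = (t ∩ ev C 0) ∪ (t ∩ ev C 1) := by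
    ext ω
    simp only [Set.mem_union, Set.mem_inter_iff]
    constructor
    · intro h
      rcases hC.2 ω with h0 | h1
      · exact Or.inl ⟨h, h0⟩
      · exact Or.inr ⟨h, h1⟩
    · rintro (⟨h, -⟩ | ⟨h, -⟩) <;> exact h
  conv_lhs => rw [pr, hunion]
  rw [measure_union hdisj (ht.inter (ev_meas hC 1)),
    ENNReal.toReal_add (measure_ne_top P _) (measure_ne_top P _)]
  rfl

lemma pr_univ_split {C : Ω → ℝ} (hC : IsBin C) :
    pr P (ev C 0) + pr P (ev C 1) = 1 := by
  have h := pr_split (P := P) hC MeasurableSet.univ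
  rw [Set.univ_inter, Set.univ_inter] at h
  rw [← h]
  simp [pr]

lemma cpr_split_le {C : Ω → ℝ} (hC : IsBin C) {t : Set Ω} (ht : MeasurableSet t) :
    cpr P (ev C 0) t + cpr P (ev C 1) t ≤ 1 := by
  rw [cpr_eq _ ht, cpr_eq _ ht, ← add_div, ← pr_split hC ht]
  rcases (pr_nonneg (P := P) t).eq_or_lt with h | h
  · rw [← h]
    norm_num
  · rw [div_self h.ne']

lemma cpr_split_eq {C : Ω → ℝ} (hC : IsBin C) {t : Set Ω} (ht : MeasurableSet t)
    (hpos : 0 < pr P t) :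
    cpr P (ev C 0) t + cpr P (ev C 1) t = 1 := by
  rw [cpr_eq _ ht, cpr_eq _ ht, ← add_div, ← pr_split hC ht, div_self hpos.ne']

lemma key_alg (q1 q0 r1 r0 a11 a10 a01 a00 b11 b10 b01 b00 p1 p0 J1 J0 : ℝ)
    (hb11 : b11 = 1 - a11) (hb10 : b10 = 1 - a10)
    (hb01 : b01 = 1 - a01) (hb00 : b00 = 1 - a00)
    (hJ1 : J1 = p1 * q0 * (a10 * r1 + b10 * r0) + p1 * q1 * (a11 * r1 + b11 * r0))
    (hJ0 : J0 = p0 * q0 * (a00 * r1 + b00 * r0) + p0 * q1 * (a01 * r1 + b01 * r0))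
    (hJ1pos : 0 < J1) (hJ0pos : 0 < J0) (hp1 : 0 < p1) (hp0 : 0 < p0) :
    p1 * q1 * (a11 * r1 + b11 * r0) / J1 - p0 * q1 * (a01 * r1 + b01 * r0) / J0 =
      q1 * q0 * (r1 - r0) *
        (r1 * (a00 * a11 - a10 * a01) - r0 * (b00 * b11 - b10 * b01)) /
        ((q1 * (a11 * r1 + b11 * r0) + q0 * (a10 * r1 + b10 * r0)) *
          (q1 * (a01 * r1 + b01 * r0) + q0 * (a00 * r1 + b00 * r0))) := by
  subst hb11 hb10 hb01 hb00
  have e1 : p1 * (q1 * (a11 * r1 + (1 - a11) * r0) + q0 * (a10 * r1 + (1 - a10) * r0)) = J1 := by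
    rw [hJ1]; ring
  have e0 : p0 * (q1 * (a01 * r1 + (1 - a01) * r0) + q0 * (a00 * r1 + (1 - a00) * r0)) = J0 := by
    rw [hJ0]; ring
  have hT1 : 0 < q1 * (a11 * r1 + (1 - a11) * r0) + q0 * (a10 * r1 + (1 - a10) * r0) := by
    nlinarith [e1, hJ1pos, hp1]
  have hT0 : 0 < q1 * (a01 * r1 + (1 - a01) * r0) + q0 * (a00 * r1 + (1 - a00) * r0) := by
    nlinarith [e0, hJ0pos, hp0]
  rw [← e1, ← e0]
  rw [div_sub_div _ _ (mul_pos hp1 hT1).ne' (mul_pos hp0 hT0).ne',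
    div_eq_div_iff (mul_ne_zero (mul_pos hp1 hT1).ne' (mul_pos hp0 hT0).ne') (mul_pos hT1 hT0).ne']
  ring

end Helpers

/-- Y-bias on the risk difference scale, conditioning on `D = d`. -/
theorem Y_bias_rd (P : Measure Ω) [IsProbabilityMeasure P]
    (X Y C D : Ω → ℝ) (hX : IsBin X) (hY : IsBin Y) (hC : IsBin C) (hD : IsBin D)
    (hX1 : 0 < pr P (ev X 1)) (hX1' : pr P (ev X 1) < 1)
    (hY1 : 0 < pr P (ev Y 1)) (hY1' : pr P (ev Y 1) < 1)
    (hfact : ∀ x y γ d : ℝ, (x = 0 ∨ x = 1) → (y = 0 ∨ y = 1) → (γ = 0 ∨ γ = 1) →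
      (d = 0 ∨ d = 1) →
      pr P (ev X x ∩ ev Y y ∩ ev C γ ∩ ev D d) =
        pr P (ev X x) * pr P (ev Y y) * cpr P (ev C γ) (ev X x ∩ ev Y y) *
          cpr P (ev D d) (ev C γ))
    (d : ℝ) (hd : d = 0 ∨ d = 1)
    (h1 : 0 < pr P (ev X 1 ∩ ev D d)) (h0 : 0 < pr P (ev X 0 ∩ ev D d)) :
    cpr P (ev Y 1) (ev X 1 ∩ ev D d) - cpr P (ev Y 1) (ev X 0 ∩ ev D d) =
      pr P (ev Y 1) * pr P (ev Y 0) *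
        (cpr P (ev D d) (ev C 1) - cpr P (ev D d) (ev C 0)) *
        (cpr P (ev D d) (ev C 1) *
            (cpr P (ev C 1) (ev X 0 ∩ ev Y 0) * cpr P (ev C 1) (ev X 1 ∩ ev Y 1) -
              cpr P (ev C 1) (ev X 1 ∩ ev Y 0) * cpr P (ev C 1) (ev X 0 ∩ ev Y 1)) -
          cpr P (ev D d) (ev C 0) *
            (cpr P (ev C 0) (ev X 0 ∩ ev Y 0) * cpr P (ev C 0) (ev X 1 ∩ ev Y 1) -
              cpr P (ev C 0) (ev X 1 ∩ ev Y 0) * cpr P (ev C 0) (ev X 0 ∩ ev Y 1))) /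
        ((pr P (ev Y 1) *
              (cpr P (ev C 1) (ev X 1 ∩ ev Y 1) * cpr P (ev D d) (ev C 1) +
                cpr P (ev C 0) (ev X 1 ∩ ev Y 1) * cpr P (ev D d) (ev C 0)) +
            pr P (ev Y 0) *
              (cpr P (ev C 1) (ev X 1 ∩ ev Y 0) * cpr P (ev D d) (ev C 1) +
                cpr P (ev C 0) (ev X 1 ∩ ev Y 0) * cpr P (ev D d) (ev C 0))) *
          (pr P (ev Y 1) *
              (cpr P (ev C 1) (ev X 0 ∩ ev Y 1) * cpr P (ev D d) (ev C 1) +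
                cpr P (ev C 0) (ev X 0 ∩ ev Y 1) * cpr P (ev D d) (ev C 0)) +
            pr P (ev Y 0) *
              (cpr P (ev C 1) (ev X 0 ∩ ev Y 0) * cpr P (ev D d) (ev C 1) +
                cpr P (ev C 0) (ev X 0 ∩ ev Y 0) * cpr P (ev D d) (ev C 0)))) := by
  have mX := ev_meas hX
  have mY := ev_meas hY
  have mC := ev_meas hC
  have mD := ev_meas hD
  have hxy : ∀ x y : ℝ, (x = 0 ∨ x = 1) → (y = 0 ∨ y = 1) →
      pr P (ev X x ∩ ev Y y ∩ ev D d) =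
        pr P (ev X x) * pr P (ev Y y) *
          (cpr P (ev C 1) (ev X x ∩ ev Y y) * cpr P (ev D d) (ev C 1) +
            cpr P (ev C 0) (ev X x ∩ ev Y y) * cpr P (ev D d) (ev C 0)) := by
    intro x y hx hy
    have h := pr_split (P := P) hC (((mX x).inter (mY y)).inter (mD d))
    rw [Set.inter_right_comm (ev X x ∩ ev Y y) (ev D d) (ev C 0),
        Set.inter_right_comm (ev X x ∩ ev Y y) (ev D d) (ev C 1)] at h
    rw [h, hfact x y 0 d hx hy (Or.inl rfl) hd, hfact x y 1 d hx hy (Or.inr rfl) hd]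
    ring
  have hxd : ∀ x : ℝ, pr P (ev X x ∩ ev D d) =
      pr P (ev X x ∩ ev Y 0 ∩ ev D d) + pr P (ev X x ∩ ev Y 1 ∩ ev D d) := by
    intro x
    have h := pr_split (P := P) hY ((mX x).inter (mD d))
    rw [Set.inter_right_comm (ev X x) (ev D d) (ev Y 0),
        Set.inter_right_comm (ev X x) (ev D d) (ev Y 1)] at h
    exact h
  have hcY : ∀ x : ℝ, cpr P (ev Y 1) (ev X x ∩ ev D d) =
      pr P (ev X x ∩ ev Y 1 ∩ ev D d) / pr P (ev X x ∩ ev D d) := by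
    intro x
    rw [cpr_eq _ ((mX x).inter (mD d)), Set.inter_right_comm (ev X x) (ev D d) (ev Y 1)]
  have hxyC : ∀ x y γ : ℝ, (x = 0 ∨ x = 1) → (y = 0 ∨ y = 1) → (γ = 0 ∨ γ = 1) →
      pr P (ev X x ∩ ev Y y ∩ ev C γ) =
        pr P (ev X x) * pr P (ev Y y) * cpr P (ev C γ) (ev X x ∩ ev Y y) *
          (cpr P (ev D 0) (ev C γ) + cpr P (ev D 1) (ev C γ)) := by
    intro x y γ hx hy hγ
    have h := pr_split (P := P) hD (((mX x).inter (mY y)).inter (mC γ))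
    rw [h, hfact x y γ 0 hx hy hγ (Or.inl rfl), hfact x y γ 1 hx hy hγ (Or.inr rfl)]
    ring
  have hle : ∀ x y : ℝ, (x = 0 ∨ x = 1) → (y = 0 ∨ y = 1) →
      pr P (ev X x ∩ ev Y y) ≤ pr P (ev X x) * pr P (ev Y y) := by
    intro x y hx hy
    have h := pr_split (P := P) hC ((mX x).inter (mY y))
    rw [hxyC x y 0 hx hy (Or.inl rfl), hxyC x y 1 hx hy (Or.inr rfl)] at h
    have ha := cpr_split_le (P := P) hC ((mX x).inter (mY y))
    have hr0 := cpr_split_le (P := P) hD (mC 0)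
    have hr1 := cpr_split_le (P := P) hD (mC 1)
    have n1 := cpr_nonneg (P := P) (ev C 0) (ev X x ∩ ev Y y)
    have n2 := cpr_nonneg (P := P) (ev C 1) (ev X x ∩ ev Y y)
    have n3 := cpr_nonneg (P := P) (ev D 0) (ev C 0)
    have n4 := cpr_nonneg (P := P) (ev D 1) (ev C 0)
    have n5 := cpr_nonneg (P := P) (ev D 0) (ev C 1)
    have n6 := cpr_nonneg (P := P) (ev D 1) (ev C 1)
    have hp := pr_nonneg (P := P) (ev X x)
    have hq := pr_nonneg (P := P) (ev Y y)
    have key : cpr P (ev C 0) (ev X x ∩ ev Y y) *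
          (cpr P (ev D 0) (ev C 0) + cpr P (ev D 1) (ev C 0)) +
        cpr P (ev C 1) (ev X x ∩ ev Y y) *
          (cpr P (ev D 0) (ev C 1) + cpr P (ev D 1) (ev C 1)) ≤ 1 := by
      nlinarith
    rw [h]
    nlinarith [mul_le_mul_of_nonneg_left key (mul_nonneg hp hq), mul_nonneg hp hq]
  have hqsum := pr_univ_split (P := P) hY
  have hq0 : 0 < pr P (ev Y 0) := by linarith
  have hpsum := pr_univ_split (P := P) hX
  have hp0 : 0 < pr P (ev X 0) := by linarith
  have cellpos : ∀ x y : ℝ, (x = 0 ∨ x = 1) → (y = 0 ∨ y = 1) →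
      0 < pr P (ev X x) → 0 < pr P (ev X x ∩ ev Y y) := by
    intro x y hx hy hpx
    have hsplit := pr_split (P := P) hY (mX x)
    have hle0 := hle x 0 hx (Or.inl rfl)
    have hle1 := hle x 1 hx (Or.inr rfl)
    have hmul : pr P (ev X x) * pr P (ev Y 0) + pr P (ev X x) * pr P (ev Y 1) =
        pr P (ev X x) := by
      rw [← mul_add, hqsum, mul_one]
    have hA := mul_pos hpx hq0
    have hB := mul_pos hpx hY1
    rcases hy with rfl | rfl
    · linarith
    · linarith
  have hs : ∀ x y : ℝ, (x = 0 ∨ x = 1) → (y = 0 ∨ y = 1) → 0 < pr P (ev X x) →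
      cpr P (ev C 0) (ev X x ∩ ev Y y) + cpr P (ev C 1) (ev X x ∩ ev Y y) = 1 :=
    fun x y hx hy hpx =>
      cpr_split_eq (P := P) hC ((mX x).inter (mY y)) (cellpos x y hx hy hpx)
  have e11 : cpr P (ev C 0) (ev X 1 ∩ ev Y 1) = 1 - cpr P (ev C 1) (ev X 1 ∩ ev Y 1) := by
    have := hs 1 1 (Or.inr rfl) (Or.inr rfl) hX1; linarith
  have e10 : cpr P (ev C 0) (ev X 1 ∩ ev Y 0) = 1 - cpr P (ev C 1) (ev X 1 ∩ ev Y 0) := by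
    have := hs 1 0 (Or.inr rfl) (Or.inl rfl) hX1; linarith
  have e01 : cpr P (ev C 0) (ev X 0 ∩ ev Y 1) = 1 - cpr P (ev C 1) (ev X 0 ∩ ev Y 1) := by
    have := hs 0 1 (Or.inl rfl) (Or.inr rfl) hp0; linarith
  have e00 : cpr P (ev C 0) (ev X 0 ∩ ev Y 0) = 1 - cpr P (ev C 1) (ev X 0 ∩ ev Y 0) := by
    have := hs 0 0 (Or.inl rfl) (Or.inl rfl) hp0; linarith
  have hJ1 : pr P (ev X 1 ∩ ev D d) =
      pr P (ev X 1) * pr P (ev Y 0) *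
        (cpr P (ev C 1) (ev X 1 ∩ ev Y 0) * cpr P (ev D d) (ev C 1) +
          cpr P (ev C 0) (ev X 1 ∩ ev Y 0) * cpr P (ev D d) (ev C 0)) +
      pr P (ev X 1) * pr P (ev Y 1) *
        (cpr P (ev C 1) (ev X 1 ∩ ev Y 1) * cpr P (ev D d) (ev C 1) +
          cpr P (ev C 0) (ev X 1 ∩ ev Y 1) * cpr P (ev D d) (ev C 0)) := by
    rw [hxd 1, hxy 1 0 (Or.inr rfl) (Or.inl rfl), hxy 1 1 (Or.inr rfl) (Or.inr rfl)]
  have hJ0 : pr P (ev X 0 ∩ ev D d) =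
      pr P (ev X 0) * pr P (ev Y 0) *
        (cpr P (ev C 1) (ev X 0 ∩ ev Y 0) * cpr P (ev D d) (ev C 1) +
          cpr P (ev C 0) (ev X 0 ∩ ev Y 0) * cpr P (ev D d) (ev C 0)) +
      pr P (ev X 0) * pr P (ev Y 1) *
        (cpr P (ev C 1) (ev X 0 ∩ ev Y 1) * cpr P (ev D d) (ev C 1) +
          cpr P (ev C 0) (ev X 0 ∩ ev Y 1) * cpr P (ev D d) (ev C 0)) := by
    rw [hxd 0, hxy 0 0 (Or.inl rfl) (Or.inl rfl), hxy 0 1 (Or.inl rfl) (Or.inr rfl)]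
  rw [hcY 1, hcY 0, hxy 1 1 (Or.inr rfl) (Or.inr rfl), hxy 0 1 (Or.inl rfl) (Or.inr rfl)]
  exact key_alg (pr P (ev Y 1)) (pr P (ev Y 0)) (cpr P (ev D d) (ev C 1))
    (cpr P (ev D d) (ev C 0))
    (cpr P (ev C 1) (ev X 1 ∩ ev Y 1)) (cpr P (ev C 1) (ev X 1 ∩ ev Y 0))
    (cpr P (ev C 1) (ev X 0 ∩ ev Y 1)) (cpr P (ev C 1) (ev X 0 ∩ ev Y 0))
    (cpr P (ev C 0) (ev X 1 ∩ ev Y 1)) (cpr P (ev C 0) (ev X 1 ∩ ev Y 0))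
    (cpr P (ev C 0) (ev X 0 ∩ ev Y 1)) (cpr P (ev C 0) (ev X 0 ∩ ev Y 0))
    (pr P (ev X 1)) (pr P (ev X 0)) (pr P (ev X 1 ∩ ev D d)) (pr P (ev X 0 ∩ ev D d))
    e11 e10 e01 e00 hJ1 hJ0 h1 h0 hX1 hp0
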